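/- Let X be a Polish space, u : C(X) → ℝ concave, positively homogeneous, monetary and monotone, and suppose u restricted to functions bounded above is represented as u(f) = inf { μ(f·1_L) : μ ∈ S } for a compact set L and probability measures S supported in L. Then for every f ∈ C(X) (not necessarily bounded above), u(f) = u(f ∧ n₀) where n₀ = sup { f(x) : x ∈ L }; i.e., the representation extends to all of C(X). -/
import Mathlib


open Set Topology Filter MeasureTheory

/-- Extension of the representation from functions bounded above to all of C(X):
if u is represented on functions bounded above by measures supported in the compact set L,
then u(f) = u(f ∧ n₀) for every f ∈ C(X), where n₀ = sup_L f. -/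
theorem representation_extends_beyond_bounded_above
    {X : Type*} [TopologicalSpace X] [PolishSpace X]
    [MeasurableSpace X] [BorelSpace X]
    (L : Set X) (hL : IsCompact L) (hLne : L.Nonempty)
    (S : Set (ProbabilityMeasure X)) (hSsupp : ∀ μ ∈ S, μ.toMeasure Lᶜ = 0)
    (u : C(X, ℝ) → ℝ)
    (hconc : ∀ f g : C(X, ℝ), ∀ t : ℝ, 0 ≤ t → t ≤ 1 →
      t * u f + (1 - t) * u g ≤ u (t • f + (1 - t) • g))
    (hhom : ∀ (c : ℝ), 0 ≤ c → ∀ f : C(X, ℝ), u (c • f) = c * u f)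
    (hcash : ∀ f : C(X, ℝ), ∀ a : ℝ, u (f + ContinuousMap.const X a) = u f + a)
    (hmono : ∀ f g : C(X, ℝ), (∀ x, f x ≤ g x) → u f ≤ u g)
    (hrep : ∀ f : C(X, ℝ), (∃ B : ℝ, ∀ x, f x ≤ B) →
      u f = sInf {r : ℝ | ∃ μ ∈ S, r = ∫ x in L, f x ∂μ.toMeasure}) :
    ∀ f : C(X, ℝ),
      u f = u (f ⊓ ContinuousMap.const X (sSup (f '' L))) ∧
      u f = sInf {r : ℝ | ∃ μ ∈ S, r = ∫ x in L, f x ∂μ.toMeasure} := by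
  intro f
  set n₀ : ℝ := sSup (f '' L) with hn₀
  set g : C(X, ℝ) := f ⊓ ContinuousMap.const X n₀ with hg
  have hbdd : ∀ x ∈ L, f x ≤ n₀ := by
    intro x hx
    exact le_csSup (hL.image f.continuous).bddAbove ⟨x, hx, rfl⟩
  have hgf : ∀ x ∈ L, g x = f x := by
    intro x hx
    simp [hg, min_eq_left (hbdd x hx)]
  have hgle : ∀ x, g x ≤ f x := fun x => min_le_left _ _
  have hgbd : ∀ x, g x ≤ n₀ := fun x => min_le_right _ _
  have hLm : MeasurableSet L := hL.measurableSet
  -- u (g - f) = 0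
  have hz : ∀ μ : ProbabilityMeasure X,
      ∫ x in L, (g - f) x ∂μ.toMeasure = 0 := by
    intro μ
    have h0 : Set.EqOn (fun x => (g - f) x) (fun _ => (0 : ℝ)) L := by
      intro x hx
      simp [hgf x hx]
    rw [setIntegral_congr_fun hLm h0, integral_zero]
  have hdiff0 : u (g - f) = 0 := by
    have h1 : u (g - f) = sInf {r : ℝ | ∃ μ ∈ S, r = ∫ x in L, (g - f) x ∂μ.toMeasure} :=
      hrep (g - f) ⟨0, fun x => by simpa using sub_nonpos.mpr (hgle x)⟩
    rw [h1]
    rcases S.eq_empty_or_nonempty with hS | ⟨μ, hμ⟩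
    · have : {r : ℝ | ∃ μ ∈ S, r = ∫ x in L, (g - f) x ∂μ.toMeasure} = (∅ : Set ℝ) := by
        ext r; simp [hS]
      rw [this, Real.sInf_empty]
    · have : {r : ℝ | ∃ μ ∈ S, r = ∫ x in L, (g - f) x ∂μ.toMeasure} = {(0 : ℝ)} := by
        ext r
        simp only [Set.mem_setOf_eq, Set.mem_singleton_iff]
        constructor
        · rintro ⟨ν, hν, rfl⟩; exact hz ν
        · rintro rfl; exact ⟨μ, hμ, (hz μ).symm⟩
      rw [this, csInf_singleton]
  -- superadditivity: u f + u (g - f) ≤ u g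
  have hsup : u f + u (g - f) ≤ u g := by
    have h := hconc f (g - f) (1/2) (by norm_num) (by norm_num)
    have heq : (1/2 : ℝ) • f + (1 - 1/2 : ℝ) • (g - f) = (1/2 : ℝ) • g := by
      ext x
      simp
      ring
    rw [heq, hhom (1/2) (by norm_num) g] at h
    linarith
  have hufg : u f ≤ u g := by linarith [hsup, hdiff0.ge]
  have hugf : u g ≤ u f := hmono g f hgle
  have huv : u f = u g := le_antisymm hufg hugf
  refine ⟨huv, ?_⟩
  have hrepg : u g = sInf {r : ℝ | ∃ μ ∈ S, r = ∫ x in L, g x ∂μ.toMeasure} :=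
    hrep g ⟨n₀, hgbd⟩
  have hset2 : {r : ℝ | ∃ μ ∈ S, r = ∫ x in L, g x ∂μ.toMeasure}
      = {r : ℝ | ∃ μ ∈ S, r = ∫ x in L, f x ∂μ.toMeasure} := by
    have hint : ∀ μ : ProbabilityMeasure X,
        ∫ x in L, g x ∂μ.toMeasure = ∫ x in L, f x ∂μ.toMeasure := fun μ =>
      setIntegral_congr_fun hLm (fun x hx => hgf x hx)
    ext r
    constructor
    · rintro ⟨μ, hμ, rfl⟩; exact ⟨μ, hμ, hint μ⟩
    · rintro ⟨μ, hμ, rfl⟩; exact ⟨μ, hμ, (hint μ).symm⟩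
  rw [huv, hrepg, hset2]
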